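/- Let (L, [·,…,·], α) be a multiplicative n-ary Hom-Nambu algebra over a field k of characteristic 0. Define the (2n−1)-ary product [x₁,…,x_{2n−1}]^{(1)} = [[x₁,…,xₙ], α(x_{n+1}),…,α(x_{2n−1})]. Then L¹ = (L, [·,…,·]^{(1)}, α²) is a multiplicative (2n−1)-ary Hom-Nambu algebra. -/

import Mathlib

open scoped BigOperators

/-- The sum appearing on the right-hand side of the `(m+1)`-ary Hom-Nambu identity
for an `(m+1)`-ary product `br` with twisting maps `α₁, …, α_m`. -/
def nambuRHS {V : Type*} [AddCommGroup V] {m : ℕ}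
    (br : (Fin (m + 1) → V) → V) (α : Fin m → V → V)
    (x : Fin m → V) (y : Fin (m + 1) → V) : V :=
  ∑ i : Fin (m + 1), br (fun j =>
    if h : (j : ℕ) < (i : ℕ) then
      α ⟨j, by have := i.isLt; omega⟩ (y j)
    else if h2 : (j : ℕ) = (i : ℕ) then
      br (Fin.snoc x (y i))
    else
      α ⟨(j : ℕ) - 1, by have := j.isLt; omega⟩ (y j))

/-- The `(m+1)`-ary Hom-Jacobian `J(x₁,…,x_m; y₁,…,y_{m+1})`. -/
def homJacobian {V : Type*} [AddCommGroup V] {m : ℕ}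
    (br : (Fin (m + 1) → V) → V) (α : Fin m → V → V)
    (x : Fin m → V) (y : Fin (m + 1) → V) : V :=
  br (Fin.snoc (fun i => α i (x i)) (br y)) - nambuRHS br α x y

/-- The `(2n−1)`-ary product
`[x₁,…,x_{2n−1}]⁽¹⁾ = [[x₁,…,xₙ], α(x_{n+1}),…,α(x_{2n−1})]`
built from an `(m+1)`-ary product `br` and a map `α` (here `n = m + 1`,
`2n − 1 = 2m + 1`). -/
def higherBracket {V : Type*} [AddCommGroup V] {m : ℕ}
    (br : (Fin (m + 1) → V) → V) (α : V → V)
    (x : Fin (2 * m + 1) → V) : V :=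
  br (Fin.cons
    (br (fun i : Fin (m + 1) => x (Fin.castLE (by omega) i)))
    (fun i : Fin m => α (x ⟨m + 1 + (i : ℕ), by have := i.isLt; omega⟩)))

-- helpers

theorem snoc_eq {V : Type*} {N : ℕ} (f : Fin N → V) (a : V) (j : Fin (N+1)) :
    (Fin.snoc f a : Fin (N+1) → V) j = if h : (j:ℕ) < N then f ⟨j, h⟩ else a := by
  simp [Fin.snoc, Fin.castLT]

theorem cons_eq {V : Type*} {N : ℕ} (a : V) (f : Fin N → V) (j : Fin (N+1)) :
    (Fin.cons a f : Fin (N+1) → V) j = if h : (j:ℕ) = 0 then a else f ⟨(j:ℕ)-1, by omega⟩ := by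
  rcases j with ⟨j,hj⟩
  cases j with
  | zero => simp
  | succ j => simp [Fin.cons]

theorem mk_congr {V : Type*} {N : ℕ} (f : Fin N → V) {a b : ℕ} (ha : a < N) (hb : b < N)
    (h : a = b) : f ⟨a, ha⟩ = f ⟨b, hb⟩ := by subst h; rfl

theorem nambuRHS_const {V : Type*} [AddCommGroup V] {M : ℕ}
    (br : (Fin (M+1) → V) → V) (α : V → V) (x : Fin M → V) (y : Fin (M+1) → V) :
    nambuRHS br (fun _ => α) x y
      = ∑ i : Fin (M+1), br (fun j => if j = i then br (Fin.snoc x (y i)) else α (y j)) := by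
  rw [nambuRHS]
  refine Finset.sum_congr rfl fun i _ => ?_
  congr 1
  funext j
  rcases lt_trichotomy ((j:ℕ)) ((i:ℕ)) with h1 | h1 | h1
  · rw [dif_pos h1, if_neg (by simp [Fin.ext_iff]; omega)]
  · rw [dif_neg (by omega), dif_pos h1, if_pos (Fin.ext h1)]
  · rw [dif_neg (by omega), dif_neg (by omega), if_neg (by simp [Fin.ext_iff]; omega)]

def auxP {V : Type*} {m : ℕ} (br : (Fin (m+1) → V) → V) (α : V → V)
    (u : Fin m → V) (w : Fin (m+1) → V) (i : Fin (m+1)) : Fin (m+1) → V :=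
  fun j => if j = i then br (Fin.snoc u (w i)) else α (w j)

theorem auxKey {V : Type*} [AddCommGroup V] {m : ℕ}
    {br : (Fin (m+1) → V) → V} {α : V → V}
    (hN : ∀ (u : Fin m → V) (w : Fin (m+1) → V),
      homJacobian br (fun _ v => α v) u w = 0)
    (u : Fin m → V) (w : Fin (m+1) → V) :
    br (Fin.snoc (fun i => α (u i)) (br w)) = ∑ i : Fin (m+1), br (auxP br α u w i) := by
  have h := hN u w
  simp only [homJacobian, sub_eq_zero] at h
  rw [h]
  exact nambuRHS_const br α u w

theorem sumSplit {M : Type*} [AddCommMonoid M] {m : ℕ} (F : Fin (2*m+1) → M) :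
    ∑ i, F i = (∑ l : Fin (m+1), F (Fin.castLE (by omega) l))
      + ∑ i : Fin m, F ⟨m+1+(i:ℕ), by have := i.isLt; omega⟩ := by
  have e : (m+1)+m = 2*m+1 := by omega
  rw [← Equiv.sum_comp (finCongr e) F, Fin.sum_univ_add]
  congr 1

def dUx {V : Type*} {m : ℕ} (hm : 1 ≤ m) (br : (Fin (m+1) → V) → V) (α : V → V)
    (x : Fin (2*m) → V) : Fin m → V :=
  fun j => if (j:ℕ) = 0 then br (fun i : Fin (m+1) => x ⟨(i:ℕ), by have := i.isLt; omega⟩)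
    else α (x ⟨m + (j:ℕ), by have := j.isLt; omega⟩)

def dW {V : Type*} {m : ℕ} (br : (Fin (m+1) → V) → V) (α : V → V)
    (y : Fin (2*m+1) → V) : Fin (m+1) → V :=
  fun j => if (j:ℕ) = 0 then br (fun i : Fin (m+1) => α (y ⟨(i:ℕ), by have := i.isLt; omega⟩))
    else α (α (y ⟨m + (j:ℕ), by have := j.isLt; omega⟩))
theorem L0 {V : Type*} [AddCommGroup V] {m : ℕ} (hm : 1 ≤ m)
    (br : (Fin (m+1) → V) → V) (α : V → V) (x : Fin (2*m) → V) (c : V) :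
    higherBracket br α (Fin.snoc x c) = br (Fin.snoc (dUx hm br α x) (α c)) := by
  unfold higherBracket
  congr 1
  funext j
  rw [cons_eq, snoc_eq]
  simp only [dUx]
  split_ifs with h0 h1 h2 h3
  · congr 1
    funext i
    rw [snoc_eq, dif_pos (by simp only [Fin.coe_castLE]; have := i.isLt; omega)]
    exact mk_congr x _ _ (by simp)
  · omega
  · rw [snoc_eq, dif_pos (by simp only; omega)]
    exact congrArg α (mk_congr x _ _ (by simp only; omega))
  · rw [snoc_eq, dif_neg (by simp only; have := j.isLt; omega)]
section Main
variable {k V : Type*} [Field k] [CharZero k] [AddCommGroup V] [Module k V] {m : ℕ}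

theorem L_alphaHB (br : MultilinearMap k (fun _ : Fin (m + 1) => V) V) (α : V →ₗ[k] V)
    (hmul : ∀ x : Fin (m + 1) → V, α (br x) = br (fun i => α (x i)))
    (y : Fin (2*m+1) → V) :
    α (higherBracket (fun v => br v) (fun v => α v) y)
      = br (dW (fun v => br v) (fun v => α v) y) := by
  unfold higherBracket
  rw [hmul]
  congr 1
  funext j
  simp only [dW]
  rw [cons_eq]
  split_ifs with h0
  · rw [hmul]
    congr 1
  · refine congrArg α (congrArg α (mk_congr y _ _ ?_))
    simp only [Fin.val_mk]
    omega

theorem L1 (hm : 1 ≤ m) (br : MultilinearMap k (fun _ : Fin (m + 1) => V) V) (α : V →ₗ[k] V)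
    (hmul : ∀ x : Fin (m + 1) → V, α (br x) = br (fun i => α (x i)))
    (x : Fin (2*m) → V) (y : Fin (2*m+1) → V) :
    higherBracket (fun v => br v) (fun v => α v)
        (Fin.snoc (fun i => α (α (x i))) (higherBracket (fun v => br v) (fun v => α v) y))
      = br (Fin.snoc (fun i => α ((fun i => α (dUx hm (fun v => br v) (fun v => α v) x i)) i))
          (br (dW (fun v => br v) (fun v => α v) y))) := by
  conv_lhs => rw [higherBracket]
  congr 1
  funext j
  rw [cons_eq, snoc_eq]
  simp only [dUx]
  split_ifs with h0 h1 h2 h3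
  · -- j = 0
    rw [hmul, hmul]
    congr 1
    funext i
    rw [snoc_eq, dif_pos (by simp only [Fin.coe_castLE]; have := i.isLt; omega)]
    rfl
  · omega
  · -- 1 ≤ j < m
    rw [snoc_eq, dif_pos (by simp only [Fin.val_mk]; omega)]
    refine congrArg α (congrArg α (congrArg α (mk_congr x _ _ ?_)))
    simp only [Fin.val_mk]
    omega
  · -- j = m
    rw [snoc_eq, dif_neg (by simp only [Fin.val_mk]; have := j.isLt; omega)]
    exact L_alphaHB br α hmul y

end Main
theorem snoc_comp {V : Type*} {N : ℕ} (α : V → V) (f : Fin N → V) (a : V) :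
    (Fin.snoc (fun t => α (f t)) (α a) : Fin (N+1) → V)
      = fun t => α ((Fin.snoc f a : Fin (N+1) → V) t) := by
  funext j
  rw [snoc_eq]
  conv_rhs => rw [snoc_eq]
  split_ifs <;> rfl

section Main2
variable {k V : Type*} [Field k] [CharZero k] [AddCommGroup V] [Module k V] {m : ℕ}

theorem headEq (hm : 1 ≤ m) (br : MultilinearMap k (fun _ : Fin (m + 1) => V) V) (α : V →ₗ[k] V)
    (hmul : ∀ x : Fin (m + 1) → V, α (br x) = br (fun i => α (x i)))
    (hNambu : ∀ (u : Fin m → V) (w : Fin (m + 1) → V),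
      homJacobian (fun v => br v) (fun _ v => α v) u w = 0)
    (x : Fin (2*m) → V) (y : Fin (2*m+1) → V) :
    br (auxP (fun v => br v) (fun v => α v)
        (fun i => α (dUx hm (fun v => br v) (fun v => α v) x i))
        (dW (fun v => br v) (fun v => α v) y) 0)
      = ∑ l : Fin (m+1), higherBracket (fun v => br v) (fun v => α v)
          (fun j => if j = Fin.castLE (by omega) l
            then higherBracket (fun v => br v) (fun v => α v)
              (Fin.snoc x (y (Fin.castLE (by omega) l)))
            else α (α (y j))) := by
  classical
  have hdw0 : dW (fun v => br v) (fun v => α v) y 0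
      = br (fun i : Fin (m+1) => α (y ⟨(i:ℕ), by have := i.isLt; omega⟩)) := by
    simp [dW]
  have h1 : auxP (fun v => br v) (fun v => α v)
        (fun i => α (dUx hm (fun v => br v) (fun v => α v) x i))
        (dW (fun v => br v) (fun v => α v) y) 0
      = Function.update (fun j => α (dW (fun v => br v) (fun v => α v) y j)) 0
          (br (Fin.snoc (fun i => α (dUx hm (fun v => br v) (fun v => α v) x i))
            (br (fun i : Fin (m+1) => α (y ⟨(i:ℕ), by have := i.isLt; omega⟩))))) := by
    funext j
    rw [Function.update_apply]
    simp only [auxP]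
    split_ifs with h
    · exact congrArg (fun c => br (Fin.snoc (fun i => α (dUx hm (fun v => br v) (fun v => α v) x i)) c)) hdw0
    · rfl
  have h2 : br (Fin.snoc (fun i => α (dUx hm (fun v => br v) (fun v => α v) x i))
        (br (fun i : Fin (m+1) => α (y ⟨(i:ℕ), by have := i.isLt; omega⟩))))
      = ∑ l : Fin (m+1), br (auxP (fun v => br v) (fun v => α v)
          (dUx hm (fun v => br v) (fun v => α v) x)
          (fun i : Fin (m+1) => α (y ⟨(i:ℕ), by have := i.isLt; omega⟩)) l) :=
    auxKey hNambu _ _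
  rw [h1, h2, MultilinearMap.map_update_sum]
  refine Finset.sum_congr rfl fun l _ => ?_
  conv_rhs => rw [higherBracket]
  congr 1
  funext j
  rw [Function.update_apply, cons_eq]
  by_cases h0 : j = 0
  · rw [if_pos h0, dif_pos (by rw [h0]; rfl)]
    congr 1
    funext i
    simp only [auxP]
    by_cases hil : i = l
    · rw [if_pos hil, if_pos (by rw [hil]), L0 hm (fun v => br v) (fun v => α v) x]
      subst hil
      rfl
    · rw [if_neg hil, if_neg (by simp only [Fin.ext_iff, Fin.coe_castLE]; exact fun h => hil (Fin.ext h))]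
      rfl
  · rw [if_neg h0, dif_neg (by (rw [Fin.ext_iff, Fin.val_zero] at h0; exact h0))]
    rw [if_neg (by simp only [Fin.ext_iff, Fin.coe_castLE, Fin.val_mk]; have := l.isLt; omega)]
    simp only [dW]
    rw [if_neg (by (rw [Fin.ext_iff, Fin.val_zero] at h0; exact h0))]
    have hj0 : (j:ℕ) ≠ 0 := by (rw [Fin.ext_iff, Fin.val_zero] at h0; exact h0)
    refine congrArg α (congrArg α (congrArg α (mk_congr y _ _ ?_)))
    omega

end Main2
section Main3
variable {k V : Type*} [Field k] [CharZero k] [AddCommGroup V] [Module k V] {m : ℕ}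

theorem L5 (hm : 1 ≤ m) (br : MultilinearMap k (fun _ : Fin (m + 1) => V) V) (α : V →ₗ[k] V)
    (hmul : ∀ x : Fin (m + 1) → V, α (br x) = br (fun i => α (x i)))
    (x : Fin (2*m) → V) (y : Fin (2*m+1) → V) (i : Fin m) :
    br (auxP (fun v => br v) (fun v => α v)
        (fun t => α (dUx hm (fun v => br v) (fun v => α v) x t))
        (dW (fun v => br v) (fun v => α v) y) (Fin.succ i))
      = higherBracket (fun v => br v) (fun v => α v)
          (fun j => if j = (⟨m+1+(i:ℕ), by have := i.isLt; omega⟩ : Fin (2*m+1))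
            then higherBracket (fun v => br v) (fun v => α v)
              (Fin.snoc x (y ⟨m+1+(i:ℕ), by have := i.isLt; omega⟩))
            else α (α (y j))) := by
  classical
  conv_rhs => rw [higherBracket]
  congr 1
  funext j
  simp only [auxP]
  rw [cons_eq]
  by_cases hji : j = Fin.succ i
  · have hv : (j:ℕ) = (i:ℕ) + 1 := by rw [hji]; simp [Fin.val_succ]
    rw [if_pos hji, dif_neg (by omega)]
    rw [if_pos (Fin.ext (by simp only [Fin.val_mk]; omega))]
    have hdw : dW (fun v => br v) (fun v => α v) y (Fin.succ i)
        = α (α (y ⟨m + 1 + (i:ℕ), by have := i.isLt; omega⟩)) := by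
      simp only [dW]
      rw [if_neg (by simp)]
      exact congrArg α (congrArg α (mk_congr y _ _ (by simp [Fin.val_succ]; omega)))
    rw [hdw, show (Fin.snoc (fun t => α (dUx hm (fun v => br v) (fun v => α v) x t))
          (α (α (y ⟨m + 1 + (i:ℕ), by have := i.isLt; omega⟩))) : Fin (m+1) → V)
        = fun t => α ((Fin.snoc (dUx hm (fun v => br v) (fun v => α v) x)
            (α (y ⟨m + 1 + (i:ℕ), by have := i.isLt; omega⟩)) : Fin (m+1) → V) t)
      from snoc_comp α _ _]
    rw [← hmul, ← L0 hm (fun v => br v) (fun v => α v) x]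
  · rw [if_neg hji]
    by_cases h0 : (j:ℕ) = 0
    · rw [dif_pos h0]
      have hdw0 : dW (fun v => br v) (fun v => α v) y j
          = br (fun t : Fin (m+1) => α (y ⟨(t:ℕ), by have := t.isLt; omega⟩)) := by
        simp [dW, h0]
      rw [hdw0, hmul]
      congr 1
      funext t
      rw [if_neg (by simp only [Fin.ext_iff, Fin.coe_castLE, Fin.val_mk]; have := t.isLt; omega)]
      rfl
    · rw [dif_neg h0]
      rw [if_neg (by
        simp only [Fin.ext_iff, Fin.val_mk]
        intro h
        exact hji (Fin.ext (by simp only [Fin.val_succ]; omega)))]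
      simp only [dW]
      rw [if_neg h0]
      refine congrArg α (congrArg α (congrArg α (mk_congr y _ _ ?_)))
      omega

end Main3

/-- If `(L, br, α)` is a multiplicative `n`-ary Hom-Nambu
algebra (`n = m+1 ≥ 2`), then `L¹ = (L, [·,…,·]⁽¹⁾, α²)`, where
`[x₁,…,x_{2n−1}]⁽¹⁾ = [[x₁,…,xₙ], α(x_{n+1}),…,α(x_{2n−1})]`, is a
multiplicative `(2n−1)`-ary Hom-Nambu algebra. -/
theorem higher_arity_homNambu
    {k V : Type*} [Field k] [CharZero k] [AddCommGroup V] [Module k V]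
    {m : ℕ} (hm : 1 ≤ m)
    (br : MultilinearMap k (fun _ : Fin (m + 1) => V) V)
    (α : V →ₗ[k] V)
    (hmul : ∀ x : Fin (m + 1) → V, α (br x) = br (fun i => α (x i)))
    (hNambu : ∀ (x : Fin m → V) (y : Fin (m + 1) → V),
      homJacobian (fun v => br v) (fun _ v => α v) x y = 0) :
    -- L¹ satisfies the (2n−1)-ary Hom-Nambu identity, all twisting maps α²
    (∀ (x : Fin (2 * m) → V) (y : Fin (2 * m + 1) → V),
      homJacobian (higherBracket (fun v => br v) (fun v => α v))
        (fun _ v => α (α v)) x y = 0) ∧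
    -- L¹ is multiplicative with respect to α²
    (∀ x : Fin (2 * m + 1) → V,
      α (α (higherBracket (fun v => br v) (fun v => α v) x))
        = higherBracket (fun v => br v) (fun v => α v)
            (fun i => α (α (x i)))) := by
  constructor
  · intro x y
    simp only [homJacobian, sub_eq_zero]
    rw [nambuRHS_const (higherBracket (fun v => br v) (fun v => α v)) (fun v => α (α v)) x y]
    rw [sumSplit]
    have hkey : br (Fin.snoc
          (fun i => α ((fun i => α (dUx hm (fun v => br v) (fun v => α v) x i)) i))
          (br (dW (fun v => br v) (fun v => α v) y)))
        = ∑ i : Fin (m+1), br (auxP (fun v => br v) (fun v => α v)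
            (fun i => α (dUx hm (fun v => br v) (fun v => α v) x i))
            (dW (fun v => br v) (fun v => α v) y) i) :=
      auxKey hNambu _ _
    rw [L1 hm br α hmul x y, hkey, Fin.sum_univ_succ]
    congr 1
    · exact headEq hm br α hmul hNambu x y
    · exact Finset.sum_congr rfl fun i _ => L5 hm br α hmul x y i
  · intro x
    simp only [higherBracket]
    rw [hmul, hmul]
    congr 1
    funext j
    rw [cons_eq]
    conv_rhs => rw [cons_eq]
    split_ifs with h0
    · rw [hmul, hmul]
    · rfl
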